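/- Snail lemma (Gabriel–Zisman exact sequence): Let F : A → B be a pointed functor between pointed groupoids, let K(F) be its strong homotopy kernel with projection functor P : K(F) → A, and let D : π₁(B) → π₀(K(F)) be the connecting map. Then the six-term sequence π₁(K(F)) → π₁(A) → π₁(B) → π₀(K(F)) → π₀(A) → π₀(B), with maps π₁(P), π₁(F), D, π₀(P), π₀(F), is exact at each of the four middle terms π₁(A), π₁(B), π₀(K(F)) and π₀(A) (the first three terms are groups, pointed by their identity elements). -/

import Mathlib

open CategoryTheory

universe w v₁ v₂ v₃ v₄ u₁ u₂ u₃ u₄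

namespace Snail

variable {A : Type u₁} [Groupoid.{v₁} A] {B : Type u₂} [Groupoid.{v₂} B]

/-- The set of connected components (isomorphism classes of objects) of a groupoid. -/
def Pi0 (A : Type u₁) [Groupoid.{v₁} A] : Type u₁ :=
  Quotient (CategoryTheory.isIsomorphicSetoid A)

/-- The connected component of an object. -/
def pi0 (a : A) : Pi0 A := Quotient.mk (CategoryTheory.isIsomorphicSetoid A) a

/-- The map induced on connected components by a functor; for pointed functors
between pointed groupoids this is the induced pointed map `π₀(F)`. -/
def pi0Map (F : A ⥤ B) : Pi0 A → Pi0 B :=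
  Quotient.map F.obj fun _ _ h => Nonempty.map (fun i => F.mapIso i) h

/-- The group homomorphism `π₁(F) : Aut (*_A) →* Aut (*_B)` induced by a pointed
functor `F` (with `F.obj pA = pB`). -/
def pi1Map (F : A ⥤ B) {pA : A} {pB : B} (h : F.obj pA = pB) : Aut pA →* Aut pB :=
  (Aut.autMulEquivOfIso (eqToIso h)).toMonoidHom.comp (F.mapAut pA)

/-- The strong homotopy kernel `K(F)` of a functor `F : A ⥤ B` with respect to the
basepoint `pB` of `B` : objects are pairs `(a, β : F a ⟶ pB)`. -/
structure HKer (F : A ⥤ B) (pB : B) : Type (max u₁ v₂) where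
  pt : A
  arr : F.obj pt ⟶ pB

/-- Morphisms `(a, β) ⟶ (a', β')` in `K(F)` are morphisms `f : a ⟶ a'` of `A` with
`F.map f ≫ β' = β`. -/
instance hkerGroupoid (F : A ⥤ B) (pB : B) : Groupoid (HKer F pB) where
  Hom x y := { f : x.pt ⟶ y.pt // F.map f ≫ y.arr = x.arr }
  id x := ⟨𝟙 x.pt, by simp⟩
  comp {x y z} f g := ⟨f.1 ≫ g.1, by rw [F.map_comp, Category.assoc, g.2, f.2]⟩
  id_comp f := Subtype.ext (Category.id_comp f.1)
  comp_id f := Subtype.ext (Category.comp_id f.1)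
  assoc f g h := Subtype.ext (Category.assoc f.1 g.1 h.1)
  inv {x y} f := ⟨Groupoid.inv f.1, by
    obtain ⟨g, h⟩ := f
    dsimp only
    rw [← h, ← Category.assoc, ← F.map_comp, Groupoid.inv_comp, F.map_id, Category.id_comp]⟩
  inv_comp f := Subtype.ext (Groupoid.inv_comp f.1)
  comp_inv f := Subtype.ext (Groupoid.comp_inv f.1)

/-- The projection functor `P : K(F) ⥤ A`, `(a, β) ↦ a`, `f ↦ f`. -/
def hkerProj (F : A ⥤ B) (pB : B) : HKer F pB ⥤ A where
  obj x := x.pt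
  map f := f.1
  map_id _ := rfl
  map_comp _ _ := rfl

/-- The connecting map `D : π₁(B) → π₀(K(F))`, sending `g ∈ Aut (*_B)` to the
connected component of the object `(*_A, g)` of `K(F)`. -/
def connecting (F : A ⥤ B) {pA : A} {pB : B} (hF : F.obj pA = pB) :
    Aut pB → Pi0 (HKer F pB) :=
  fun g => pi0 (⟨pA, eqToHom hF ≫ g.hom⟩ : HKer F pB)

lemma pi1Map_hom (F : A ⥤ B) {pA : A} {pB : B} (h : F.obj pA = pB) (a : Aut pA) :
    (pi1Map F h a).hom = eqToHom h.symm ≫ F.map a.hom ≫ eqToHom h := rfl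

lemma aut_one_hom {pA : A} : (1 : Aut pA).hom = 𝟙 pA := rfl

/-- **Snail lemma (Gabriel–Zisman exact sequence).**
For a pointed functor `F : A ⥤ B` between pointed groupoids, the six-term sequence
`π₁(K(F)) → π₁(A) → π₁(B) → π₀(K(F)) → π₀(A) → π₀(B)` (with maps `π₁(P)`, `π₁(F)`,
the connecting map `D`, `π₀(P)`, `π₀(F)`) is exact at the four middle terms. -/
theorem snail_lemma {A : Type u₁} [Groupoid.{v₁} A] {B : Type u₂} [Groupoid.{v₂} B]
    (F : A ⥤ B) (pA : A) (pB : B) (hF : F.obj pA = pB) :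
    -- exactness at π₁(A)
    (∀ a : Aut pA,
      (∃ k : Aut (⟨pA, eqToHom hF⟩ : HKer F pB), pi1Map (hkerProj F pB) rfl k = a) ↔
        pi1Map F hF a = 1) ∧
    -- exactness at π₁(B)
    (∀ b : Aut pB,
      (∃ a : Aut pA, pi1Map F hF a = b) ↔
        connecting F hF b = pi0 (⟨pA, eqToHom hF⟩ : HKer F pB)) ∧
    -- exactness at π₀(K(F))
    (∀ x : Pi0 (HKer F pB),
      (∃ b : Aut pB, connecting F hF b = x) ↔ pi0Map (hkerProj F pB) x = pi0 pA) ∧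
    -- exactness at π₀(A)
    (∀ y : Pi0 A,
      (∃ x : Pi0 (HKer F pB), pi0Map (hkerProj F pB) x = y) ↔ pi0Map F y = pi0 pB) := by
  subst hF
  refine ⟨?_, ?_, ?_, ?_⟩
  · -- exactness at π₁(A)
    intro a
    constructor
    · rintro ⟨k, rfl⟩
      have hk := k.hom.2
      simp only [eqToHom_refl, Category.comp_id] at hk
      apply Iso.ext
      show 𝟙 _ ≫ F.map (𝟙 _ ≫ ((hkerProj F (F.obj pA)).map k.hom) ≫ 𝟙 _) ≫ 𝟙 _ = 𝟙 _
      simp only [Category.id_comp, Category.comp_id]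
      exact hk
    · intro h
      have hmap : F.map a.hom = 𝟙 (F.obj pA) := by
        have := congrArg Iso.hom h
        rw [pi1Map_hom, aut_one_hom] at this
        simpa using this
      refine ⟨(Groupoid.isoEquivHom _ _).symm ⟨a.hom, by simp [hmap]⟩, ?_⟩
      apply Iso.ext
      show 𝟙 _ ≫ a.hom ≫ 𝟙 _ = a.hom
      simp
  · -- exactness at π₁(B)
    intro b
    constructor
    · rintro ⟨a, rfl⟩
      refine Quotient.sound ⟨(Groupoid.isoEquivHom _ _).symm ⟨a.hom, ?_⟩⟩
      show F.map a.hom ≫ eqToHom rfl = eqToHom rfl ≫ (pi1Map F rfl a).hom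
      rw [pi1Map_hom]
      simp
    · intro h
      obtain ⟨i⟩ := Quotient.exact h
      have hi := i.hom.2
      simp only [eqToHom_refl, Category.comp_id, Category.id_comp] at hi
      refine ⟨(Groupoid.isoEquivHom _ _).symm i.hom.1, ?_⟩
      apply Iso.ext
      show 𝟙 _ ≫ F.map i.hom.1 ≫ 𝟙 _ = b.hom
      simpa using hi
  · -- exactness at π₀(K(F))
    intro x
    constructor
    · rintro ⟨b, rfl⟩
      rfl
    · intro h
      induction x using Quotient.inductionOn with
      | h x =>
        obtain ⟨a, β⟩ := x
        obtain ⟨i⟩ := Quotient.exact h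
        refine ⟨(Groupoid.isoEquivHom _ _).symm (F.map i.inv ≫ β), ?_⟩
        refine Quotient.sound ⟨(Groupoid.isoEquivHom _ _).symm ⟨i.inv, ?_⟩⟩
        show F.map i.inv ≫ β = eqToHom rfl ≫ F.map i.inv ≫ β
        simp
  · -- exactness at π₀(A)
    intro y
    induction y using Quotient.inductionOn with
    | h a =>
      constructor
      · rintro ⟨x, hx⟩
        induction x using Quotient.inductionOn with
        | h x =>
          obtain ⟨c, β⟩ := x
          obtain ⟨i⟩ := Quotient.exact hx
          exact Quotient.sound ⟨(F.mapIso i).symm ≪≫ (Groupoid.isoEquivHom _ _).symm β⟩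
      · intro h
        obtain ⟨j⟩ := Quotient.exact h
        exact ⟨pi0 (⟨a, j.hom⟩ : HKer F (F.obj pA)), rfl⟩

end Snail
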